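/- Order of nonzero singular values of a blown up matrix under the growth condition: suppose P is a fixed a×b pattern matrix with rank r, and B is its m×n blown up matrix with block sizes satisfying m_i/m ≥ c and n_j/n ≥ d for fixed constants c,d ∈ (0,1). Then there exist constants 0 < c₁ ≤ c₂ (depending only on P, c, d) such that every nonzero singular value s of B satisfies c₁√(mn) ≤ s ≤ c₂√(mn). -/

import Mathlib

open Finset Matrix in

lemma key_bound {a b : ℕ} (P : Matrix (Fin a) (Fin b) ℝ) {d : ℝ} (hd0 : 0 < d) (hd1 : d ≤ 1) :
    ∃ K > 0, ∀ (f u : Fin b → ℝ), (∀ t, d ≤ f t) → (∀ t, f t ≤ 1) →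
      u ∈ LinearMap.range (Pᵀ).mulVecLin →
      K * (∑ t, u t ^ 2) ≤ ∑ k, (P.mulVec (fun t => f t * u t) k) ^ 2 := by
  set V : Submodule ℝ (Fin b → ℝ) := LinearMap.range (Pᵀ).mulVecLin with hV
  by_cases htriv : ∀ u ∈ V, u = (0 : Fin b → ℝ)
  · refine ⟨1, one_pos, fun f u hf1 hf2 hu => ?_⟩
    have h0 : u = 0 := htriv u hu
    subst h0
    have h1 : (fun t : Fin b => f t * (0 : Fin b → ℝ) t) = (0 : Fin b → ℝ) := by
      funext t; simp
    rw [h1, Matrix.mulVec_zero]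
    simp
  · push_neg at htriv
    obtain ⟨u₀, hu₀V, hu₀⟩ := htriv
    -- the compact set
    set G : (Fin b → ℝ) × (Fin b → ℝ) → ℝ :=
      fun p => ∑ k, (P.mulVec (fun t => p.1 t * p.2 t) k) ^ 2 with hG
    set S : Set ((Fin b → ℝ) × (Fin b → ℝ)) :=
      Set.Icc (fun _ => d, fun _ => -1) (fun _ => 1, fun _ => 1) ∩
        {p | p.2 ∈ V ∧ ∑ t, (p.2 t) ^ 2 = 1} with hS
    have hGcont : Continuous G := by
      simp only [hG, Matrix.mulVec, dotProduct]
      fun_prop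
    have hSc : IsCompact S := by
      apply isCompact_Icc.inter_right
      apply IsClosed.inter
      · exact IsClosed.preimage continuous_snd V.closed_of_finiteDimensional
      · apply isClosed_eq _ continuous_const
        fun_prop
    -- nonempty
    have hsum0 : (0:ℝ) < ∑ t, u₀ t ^ 2 := by
      rcases Function.ne_iff.1 hu₀ with ⟨t₀, ht₀⟩
      have : (0:ℝ) < u₀ t₀ ^ 2 := by
        have := pow_pos (abs_pos.2 ht₀) 2
        rwa [sq_abs] at this
      refine lt_of_lt_of_le this ?_
      exact Finset.single_le_sum (f := fun t => u₀ t ^ 2) (fun t _ => sq_nonneg _)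
        (mem_univ t₀)
    have hmemS : ∀ (f u : Fin b → ℝ), (∀ t, d ≤ f t) → (∀ t, f t ≤ 1) → u ∈ V →
        (∑ t, u t ^ 2) = 1 → (f, u) ∈ S := by
      intro f u hf1 hf2 huV hu1
      refine ⟨?_, huV, hu1⟩
      rw [Set.mem_Icc, Prod.mk_le_mk, Prod.mk_le_mk]
      have hsq : ∀ t, u t ^ 2 ≤ 1 := by
        intro t
        rw [← hu1]
        exact Finset.single_le_sum (f := fun t => u t ^ 2) (fun t _ => sq_nonneg (u t))
          (mem_univ t)
      refine ⟨⟨fun t => hf1 t, fun t => ?_⟩, ⟨fun t => hf2 t, fun t => ?_⟩⟩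
      · show (-1 : ℝ) ≤ u t
        nlinarith [hsq t, sq_nonneg (u t + 1)]
      · show u t ≤ (1 : ℝ)
        nlinarith [hsq t, sq_nonneg (u t - 1)]
    have hSne : S.Nonempty := by
      set s : ℝ := Real.sqrt (∑ t, u₀ t ^ 2) with hs
      have hspos : 0 < s := Real.sqrt_pos.2 hsum0
      refine ⟨((fun _ => 1), s⁻¹ • u₀), hmemS _ _ (fun _ => hd1) (fun _ => le_refl 1)
        (V.smul_mem _ hu₀V) ?_⟩
      have : ∑ t, (s⁻¹ • u₀) t ^ 2 = s⁻¹ ^ 2 * ∑ t, u₀ t ^ 2 := by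
        rw [Finset.mul_sum]; congr 1; funext t; simp [Pi.smul_apply, smul_eq_mul]; ring
      rw [this, hs, inv_pow, Real.sq_sqrt hsum0.le, inv_mul_cancel₀ hsum0.ne']
    obtain ⟨p₀, hp₀S, hmin⟩ := hSc.exists_isMinOn hSne hGcont.continuousOn
    have hp₀min : ∀ q ∈ S, G p₀ ≤ G q := fun q hq => hmin hq
    refine ⟨G p₀, ?_, ?_⟩
    · -- positivity of the minimum
      rcases lt_or_eq_of_le (Finset.sum_nonneg fun k _ => sq_nonneg
        (P.mulVec (fun t => p₀.1 t * p₀.2 t) k)) with h | h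
      · exact h
      exfalso
      have hzero : ∀ k, P.mulVec (fun t => p₀.1 t * p₀.2 t) k = 0 := by
        intro k
        have := (Finset.sum_eq_zero_iff_of_nonneg (fun k _ => sq_nonneg
          (P.mulVec (fun t => p₀.1 t * p₀.2 t) k))).1 h.symm k (mem_univ k)
        exact (pow_eq_zero_iff two_ne_zero).1 this
      obtain ⟨⟨hlo, hhi⟩, ⟨z, hz⟩, hnorm1⟩ := hp₀S
      -- compute the pairing two ways
      have hd' : d ≤ ∑ t, p₀.2 t * (p₀.1 t * p₀.2 t) := by
        calc d = d * ∑ t, p₀.2 t ^ 2 := by rw [hnorm1, mul_one]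
        _ = ∑ t, d * p₀.2 t ^ 2 := Finset.mul_sum _ _ _
        _ ≤ ∑ t, p₀.2 t * (p₀.1 t * p₀.2 t) := by
            refine Finset.sum_le_sum fun t _ => ?_
            have h1 : d ≤ p₀.1 t := hlo.1 t
            nlinarith [sq_nonneg (p₀.2 t)]
      have hzero' : ∑ t, p₀.2 t * (p₀.1 t * p₀.2 t) = 0 := by
        have hform : ∀ t, p₀.2 t = ∑ i, P i t * z i := by
          intro t
          rw [← hz, Matrix.mulVecLin_apply]
          simp only [Matrix.mulVec, dotProduct, Matrix.transpose_apply]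
        calc ∑ t, p₀.2 t * (p₀.1 t * p₀.2 t)
            = ∑ t, ∑ i, z i * (P i t * (p₀.1 t * p₀.2 t)) := by
              refine Finset.sum_congr rfl fun t _ => ?_
              rw [hform t, Finset.sum_mul]
              refine Finset.sum_congr rfl fun i _ => by ring
          _ = ∑ i, z i * P.mulVec (fun t => p₀.1 t * p₀.2 t) i := by
              rw [Finset.sum_comm]
              refine Finset.sum_congr rfl fun i _ => ?_
              simp [Matrix.mulVec, dotProduct, Finset.mul_sum]
          _ = 0 := by simp [hzero]
      linarith
    · -- the bound
      intro f u hf1 hf2 huV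
      rcases eq_or_lt_of_le (Finset.sum_nonneg fun t (_ : t ∈ univ) => sq_nonneg (u t)) with h | h
      · have hu0 : u = 0 := by
          funext t
          have := (Finset.sum_eq_zero_iff_of_nonneg (fun t _ => sq_nonneg (u t))).1 h.symm t
            (mem_univ t)
          exact (pow_eq_zero_iff two_ne_zero).1 this
        subst hu0
        have : (fun t : Fin b => f t * 0) = (0 : Fin b → ℝ) := by funext t; simp
        simp only [Pi.zero_apply, this, Matrix.mulVec_zero]
        simp
      · set s : ℝ := Real.sqrt (∑ t, u t ^ 2) with hs
        have hspos : 0 < s := Real.sqrt_pos.2 h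
        have hs2 : s ^ 2 = ∑ t, u t ^ 2 := Real.sq_sqrt h.le
        have hmem : (f, s⁻¹ • u) ∈ S := by
          refine hmemS _ _ hf1 hf2 (V.smul_mem _ huV) ?_
          have : ∑ t, (s⁻¹ • u) t ^ 2 = s⁻¹ ^ 2 * ∑ t, u t ^ 2 := by
            rw [Finset.mul_sum]; congr 1; funext t; simp [Pi.smul_apply, smul_eq_mul]; ring
          rw [this, ← hs2, inv_pow, inv_mul_cancel₀ (by positivity)]
        have hle := hp₀min _ hmem
        have hGval : G (f, s⁻¹ • u) = s⁻¹ ^ 2 * ∑ k, (P.mulVec (fun t => f t * u t) k) ^ 2 := by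
          simp only [hG]
          rw [Finset.mul_sum]
          refine Finset.sum_congr rfl fun k _ => ?_
          have : (fun t => f t * (s⁻¹ • u) t) = s⁻¹ • (fun t => f t * u t) := by
            funext t; simp [Pi.smul_apply, smul_eq_mul]; ring
          rw [this, Matrix.mulVec_smul]
          simp [smul_eq_mul]; ring
        rw [hGval] at hle
        have := mul_le_mul_of_nonneg_left hle (sq_nonneg s)
        calc G p₀ * ∑ t, u t ^ 2 = s ^ 2 * G p₀ := by rw [hs2]; ring
          _ ≤ s ^ 2 * (s⁻¹ ^ 2 * ∑ k, (P.mulVec (fun t => f t * u t) k) ^ 2) := this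
          _ = ∑ k, (P.mulVec (fun t => f t * u t) k) ^ 2 := by
              rw [← mul_assoc, ← mul_pow, mul_inv_cancel₀ hspos.ne', one_pow, one_mul]

noncomputable def sval {m n : ℕ} (A : Matrix (Fin m) (Fin n) ℝ) (i : Fin n) : ℝ :=
  Real.sqrt ((Matrix.isHermitian_conjTranspose_mul_self A).eigenvalues
    (Tuple.sort (Matrix.isHermitian_conjTranspose_mul_self A).eigenvalues i.rev))

open Finset Matrix in
theorem stmt7' {a b : ℕ} (P : Matrix (Fin a) (Fin b) ℝ) (c d : ℝ)
    (hc : c ∈ Set.Ioo (0:ℝ) 1) (hd : d ∈ Set.Ioo (0:ℝ) 1)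
    (key_bound : ∃ K > 0, ∀ (f u : Fin b → ℝ), (∀ t, d ≤ f t) → (∀ t, f t ≤ 1) →
      u ∈ LinearMap.range (Pᵀ).mulVecLin →
      K * (∑ t, u t ^ 2) ≤ ∑ k, (P.mulVec (fun t => f t * u t) k) ^ 2) :
    ∃ c₁ c₂ : ℝ, 0 < c₁ ∧ c₁ ≤ c₂ ∧
      ∀ (m n : ℕ) (φ : Fin m → Fin a) (ψ : Fin n → Fin b)
        (B : Matrix (Fin m) (Fin n) ℝ),
        (∀ i j, B i j = P (φ i) (ψ j)) →
        (∀ i : Fin a, c * (m : ℝ) ≤ ((Finset.univ.filter (fun x => φ x = i)).card : ℝ)) →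
        (∀ j : Fin b, d * (n : ℝ) ≤ ((Finset.univ.filter (fun x => ψ x = j)).card : ℝ)) →
        ∀ k : Fin n, sval B k ≠ 0 →
          c₁ * Real.sqrt ((m : ℝ) * n) ≤ sval B k ∧
          sval B k ≤ c₂ * Real.sqrt ((m : ℝ) * n) := by
  obtain ⟨hc0, hc1⟩ := hc
  obtain ⟨hd0, hd1⟩ := hd
  obtain ⟨K, hK, hKey⟩ := key_bound
  set T : ℝ := ∑ r, ∑ t, P r t ^ 2 with hT
  have hT0 : 0 ≤ T := by positivity
  refine ⟨Real.sqrt (c * K), Real.sqrt (c * K) + Real.sqrt T, Real.sqrt_pos.2 (by positivity),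
    le_add_of_nonneg_right (Real.sqrt_nonneg _), ?_⟩
  intro m n φ ψ B hB hφ hψ k hk
  set hH := Matrix.isHermitian_conjTranspose_mul_self B with hHdef
  set i : Fin n := Tuple.sort hH.eigenvalues k.rev with hidef
  set lam : ℝ := hH.eigenvalues i with hlamdef
  have hsval : sval B k = Real.sqrt lam := rfl
  have hlam0 : 0 ≤ lam := Matrix.eigenvalues_conjTranspose_mul_self_nonneg B i
  have hlampos : 0 < lam := by
    rcases hlam0.lt_or_eq with h | h
    · exact h
    · exact absurd (by rw [hsval, ← h, Real.sqrt_zero]) hk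
  set v : Fin n → ℝ := ⇑(hH.eigenvectorBasis i) with hv
  have hveq : (Bᴴ * B) *ᵥ v = lam • v := hH.mulVec_eigenvectorBasis i
  have hvne : v ≠ 0 := by
    have hb := hH.eigenvectorBasis.orthonormal.ne_zero i
    intro h0
    exact hb (by ext j; exact congrFun h0 j)
  have hn : 0 < n := k.pos
  have hn' : (0:ℝ) < n := by exact_mod_cast hn
  -- the vector w = B v and the representation v = Bᴴ y
  set w : Fin m → ℝ := B *ᵥ v with hw
  have hvyB : Bᴴ *ᵥ w = lam • v := by rw [hw, Matrix.mulVec_mulVec]; exact hveq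
  set y : Fin m → ℝ := lam⁻¹ • w with hy
  have hvy : Bᴴ *ᵥ y = v := by
    rw [hy, Matrix.mulVec_smul, hvyB, smul_smul, inv_mul_cancel₀ hlampos.ne', one_smul]
  set z : Fin a → ℝ := fun r => ∑ x ∈ univ.filter (fun x => φ x = r), y x with hz
  set u : Fin b → ℝ := Pᵀ *ᵥ z with hu
  have hvu : ∀ j, v j = u (ψ j) := by
    intro j
    have h1 : v j = ∑ x, B x j * y x := by
      rw [← hvy]
      simp [Matrix.mulVec, dotProduct, Matrix.conjTranspose_apply]
    have h2 : u (ψ j) = ∑ r, P r (ψ j) * z r := by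
      rw [hu]
      simp [Matrix.mulVec, dotProduct, Matrix.transpose_apply]
    rw [h1, h2, ← Finset.sum_fiberwise univ φ (fun x => B x j * y x)]
    refine Finset.sum_congr rfl fun r _ => ?_
    rw [hz, Finset.mul_sum]
    refine Finset.sum_congr rfl fun x hx => ?_
    rw [Finset.mem_filter] at hx
    rw [hB x j, hx.2]
  have huV : u ∈ LinearMap.range (Pᵀ).mulVecLin :=
    ⟨z, by rw [Matrix.mulVecLin_apply, hu]⟩
  -- column counts
  set N : Fin b → ℝ := fun t => (((univ.filter (fun x => ψ x = t)).card : ℕ) : ℝ) with hN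
  have hN0 : ∀ t, 0 ≤ N t := fun t => Nat.cast_nonneg _
  have hNle : ∀ t, N t ≤ (n:ℝ) := by
    intro t
    rw [hN]
    have := Finset.card_filter_le (univ : Finset (Fin n)) (fun x => ψ x = t)
    calc (((univ.filter (fun x => ψ x = t)).card : ℕ) : ℝ) ≤ ((univ : Finset (Fin n)).card : ℝ) := by
          exact_mod_cast this
      _ = n := by rw [Finset.card_univ, Fintype.card_fin]
  have hNd : ∀ t, d * n ≤ N t := hψ
  set f : Fin b → ℝ := fun t => N t / n with hf
  have hf1 : ∀ t, d ≤ f t := by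
    intro t
    rw [hf, le_div_iff₀ hn']
    exact hNd t
  have hf2 : ∀ t, f t ≤ 1 := by
    intro t
    rw [hf, div_le_one hn']
    exact hNle t
  set g : Fin b → ℝ := fun t => f t * u t with hg
  -- sum of v² in terms of u
  have hSv : ∑ j, v j ^ 2 = ∑ t, N t * u t ^ 2 := by
    rw [← Finset.sum_fiberwise univ ψ (fun j => v j ^ 2)]
    refine Finset.sum_congr rfl fun t _ => ?_
    calc ∑ j ∈ univ.filter (fun x => ψ x = t), v j ^ 2
        = ∑ _j ∈ univ.filter (fun x => ψ x = t), u t ^ 2 := by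
          refine Finset.sum_congr rfl fun j hj => ?_
          rw [Finset.mem_filter] at hj
          rw [hvu j, hj.2]
      _ = N t * u t ^ 2 := by rw [Finset.sum_const, nsmul_eq_mul, hN]
  have hSvpos : 0 < ∑ j, v j ^ 2 := by
    rcases Function.ne_iff.1 hvne with ⟨j₀, hj₀⟩
    have h1 : (0:ℝ) < v j₀ ^ 2 := by
      have := pow_pos (abs_pos.2 hj₀) 2
      rwa [sq_abs] at this
    refine lt_of_lt_of_le h1 ?_
    exact Finset.single_le_sum (f := fun j => v j ^ 2) (fun j _ => sq_nonneg _) (mem_univ j₀)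
  -- B v in terms of P
  have hBv : ∀ x, w x = (n : ℝ) * (P *ᵥ g) (φ x) := by
    intro x
    have h1 : w x = ∑ j, B x j * v j := by
      rw [hw]; simp [Matrix.mulVec, dotProduct]
    have h2 : ∑ j, B x j * v j = ∑ t, N t * (P (φ x) t * u t) := by
      rw [← Finset.sum_fiberwise univ ψ (fun j => B x j * v j)]
      refine Finset.sum_congr rfl fun t _ => ?_
      calc ∑ j ∈ univ.filter (fun x => ψ x = t), B x j * v j
          = ∑ _j ∈ univ.filter (fun x => ψ x = t), P (φ x) t * u t := by
            refine Finset.sum_congr rfl fun j hj => ?_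
            rw [Finset.mem_filter] at hj
            rw [hB x j, hvu j, hj.2]
        _ = N t * (P (φ x) t * u t) := by rw [Finset.sum_const, nsmul_eq_mul, hN]
    have h3 : (P *ᵥ g) (φ x) = ∑ t, P (φ x) t * (f t * u t) := by
      simp [Matrix.mulVec, dotProduct, hg]
    rw [h1, h2, h3, Finset.mul_sum]
    refine Finset.sum_congr rfl fun t _ => ?_
    rw [hf]
    field_simp
  -- the quadratic identity
  have hQuad : lam * ∑ j, v j ^ 2 = ∑ x, w x ^ 2 := by
    have h1 : ∑ j, v j * (Bᴴ *ᵥ w) j = lam * ∑ j, v j ^ 2 := by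
      rw [hvyB, Finset.mul_sum]
      refine Finset.sum_congr rfl fun j _ => ?_
      simp [Pi.smul_apply, smul_eq_mul]
      ring
    rw [← h1]
    calc ∑ j, v j * (Bᴴ *ᵥ w) j
        = ∑ j, ∑ x, v j * (B x j * w x) := by
          refine Finset.sum_congr rfl fun j _ => ?_
          simp [Matrix.mulVec, dotProduct, Matrix.conjTranspose_apply, Finset.mul_sum]
      _ = ∑ x, ∑ j, v j * (B x j * w x) := Finset.sum_comm
      _ = ∑ x, w x * (B *ᵥ v) x := by
          refine Finset.sum_congr rfl fun x _ => ?_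
          simp only [Matrix.mulVec, dotProduct, Finset.mul_sum]
          refine Finset.sum_congr rfl fun j _ => by ring
      _ = ∑ x, w x ^ 2 := by
          refine Finset.sum_congr rfl fun x _ => ?_
          rw [← hw]; ring
  -- lower bound on lam
  set Mc : Fin a → ℝ := fun r => (((univ.filter (fun x => φ x = r)).card : ℕ) : ℝ) with hMc
  have hMcb : ∀ r, c * m ≤ Mc r := hφ
  have hmain : c * (m:ℝ) * (n:ℝ)^2 * (K * ∑ t, u t ^ 2) ≤ ∑ x, w x ^ 2 := by
    calc c * (m:ℝ) * (n:ℝ)^2 * (K * ∑ t, u t ^ 2)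
        ≤ c * (m:ℝ) * (n:ℝ)^2 * ∑ r, (P *ᵥ g) r ^ 2 := by
          refine mul_le_mul_of_nonneg_left ?_ (by positivity)
          exact hKey f u hf1 hf2 huV
      _ = ∑ r, (c * m) * (((n:ℝ)) * (P *ᵥ g) r) ^ 2 := by
          rw [Finset.mul_sum]
          refine Finset.sum_congr rfl fun r _ => by ring
      _ ≤ ∑ r, Mc r * (((n:ℝ)) * (P *ᵥ g) r) ^ 2 := by
          refine Finset.sum_le_sum fun r _ => ?_
          exact mul_le_mul_of_nonneg_right (hMcb r) (sq_nonneg _)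
      _ = ∑ r, ∑ _x ∈ univ.filter (fun x => φ x = r), (((n:ℝ)) * (P *ᵥ g) r) ^ 2 := by
          refine Finset.sum_congr rfl fun r _ => ?_
          rw [Finset.sum_const, nsmul_eq_mul, hMc]
      _ = ∑ r, ∑ x ∈ univ.filter (fun x => φ x = r), w x ^ 2 := by
          refine Finset.sum_congr rfl fun r _ => ?_
          refine Finset.sum_congr rfl fun x hx => ?_
          rw [Finset.mem_filter] at hx
          rw [hBv x, hx.2]
      _ = ∑ x, w x ^ 2 := Finset.sum_fiberwise univ φ (fun x => w x ^ 2)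
  have h4 : ∑ j, v j ^ 2 ≤ (n:ℝ) * ∑ t, u t ^ 2 := by
    rw [hSv, Finset.mul_sum]
    refine Finset.sum_le_sum fun t _ => ?_
    exact mul_le_mul_of_nonneg_right (hNle t) (sq_nonneg _)
  have hlamlow : c * K * ((m:ℝ) * n) ≤ lam := by
    have hlow : c * K * ((m:ℝ) * n) * (∑ j, v j ^ 2) ≤ lam * (∑ j, v j ^ 2) := by
      calc c * K * ((m:ℝ) * n) * (∑ j, v j ^ 2)
          ≤ c * K * ((m:ℝ) * n) * ((n:ℝ) * ∑ t, u t ^ 2) :=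
            mul_le_mul_of_nonneg_left h4 (by positivity)
        _ = c * (m:ℝ) * (n:ℝ)^2 * (K * ∑ t, u t ^ 2) := by ring
        _ ≤ ∑ x, w x ^ 2 := hmain
        _ = lam * ∑ j, v j ^ 2 := hQuad.symm
    exact le_of_mul_le_mul_right hlow hSvpos
  -- upper bound on lam
  have hup : lam ≤ T * ((m:ℝ) * n) := by
    have h5 : ∀ x, w x ^ 2 ≤ (∑ j, B x j ^ 2) * ∑ j, v j ^ 2 := by
      intro x
      have h1 : w x = ∑ j, B x j * v j := by
        rw [hw]; simp [Matrix.mulVec, dotProduct]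
      rw [h1]
      exact Finset.sum_mul_sq_le_sq_mul_sq univ _ _
    have h7 : ∀ x j, B x j ^ 2 ≤ T := by
      intro x j
      rw [hB]
      calc P (φ x) (ψ j) ^ 2 ≤ ∑ t, P (φ x) t ^ 2 :=
          Finset.single_le_sum (f := fun t => P (φ x) t ^ 2) (fun t _ => sq_nonneg _)
            (mem_univ (ψ j))
        _ ≤ T :=
          Finset.single_le_sum (f := fun r => ∑ t, P r t ^ 2) (fun r _ => by positivity)
            (mem_univ (φ x))
    have h6 : ∑ x, ∑ j, B x j ^ 2 ≤ (m:ℝ) * n * T := by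
      calc ∑ x, ∑ j, B x j ^ 2 ≤ ∑ _x : Fin m, ∑ _j : Fin n, T :=
          Finset.sum_le_sum fun x _ => Finset.sum_le_sum fun j _ => h7 x j
        _ = (m:ℝ) * n * T := by
            simp [Finset.sum_const, Finset.card_univ]
            ring
    have h8 : lam * (∑ j, v j ^ 2) ≤ (T * ((m:ℝ) * n)) * (∑ j, v j ^ 2) := by
      rw [hQuad]
      calc ∑ x, w x ^ 2 ≤ ∑ x, (∑ j, B x j ^ 2) * ∑ j, v j ^ 2 :=
          Finset.sum_le_sum fun x _ => h5 x
        _ = (∑ x, ∑ j, B x j ^ 2) * ∑ j, v j ^ 2 := (Finset.sum_mul _ _ _).symm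
        _ ≤ ((m:ℝ) * n * T) * ∑ j, v j ^ 2 := mul_le_mul_of_nonneg_right h6 hSvpos.le
        _ = (T * ((m:ℝ) * n)) * (∑ j, v j ^ 2) := by ring
    exact le_of_mul_le_mul_right h8 hSvpos
  constructor
  · rw [hsval, ← Real.sqrt_mul (by positivity) ((m:ℝ) * n)]
    exact Real.sqrt_le_sqrt hlamlow
  · rw [hsval]
    calc Real.sqrt lam ≤ Real.sqrt (T * ((m:ℝ) * n)) := Real.sqrt_le_sqrt hup
      _ = Real.sqrt T * Real.sqrt ((m:ℝ) * n) := Real.sqrt_mul hT0 _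
      _ ≤ (Real.sqrt (c * K) + Real.sqrt T) * Real.sqrt ((m:ℝ) * n) := by
          refine mul_le_mul_of_nonneg_right ?_ (Real.sqrt_nonneg _)
          linarith [Real.sqrt_nonneg (c * K)]

/-- Under the growth condition GC1, every nonzero singular value of the blown up matrix
of a fixed pattern matrix `P` is of order `√(mn)`, with constants depending only on
`P`, `c`, `d`. -/
theorem stmt7 {a b : ℕ} (P : Matrix (Fin a) (Fin b) ℝ) (c d : ℝ)
    (hc : c ∈ Set.Ioo (0:ℝ) 1) (hd : d ∈ Set.Ioo (0:ℝ) 1) :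
    ∃ c₁ c₂ : ℝ, 0 < c₁ ∧ c₁ ≤ c₂ ∧
      ∀ (m n : ℕ) (φ : Fin m → Fin a) (ψ : Fin n → Fin b)
        (B : Matrix (Fin m) (Fin n) ℝ),
        (∀ i j, B i j = P (φ i) (ψ j)) →
        (∀ i : Fin a, c * (m : ℝ) ≤ ((Finset.univ.filter (fun x => φ x = i)).card : ℝ)) →
        (∀ j : Fin b, d * (n : ℝ) ≤ ((Finset.univ.filter (fun x => ψ x = j)).card : ℝ)) →
        ∀ k : Fin n, sval B k ≠ 0 →
          c₁ * Real.sqrt ((m : ℝ) * n) ≤ sval B k ∧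
          sval B k ≤ c₂ * Real.sqrt ((m : ℝ) * n) := by
  exact stmt7' P c d hc hd (key_bound P hd.1 hd.2.le)
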